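/- Let d ≥ 1, 1 ≤ s ≤ d, γ > 1, λ > 0, κ > 0, and set c₀ = (γ+1)/(γ−1). Let Ĉ be a real d×d symmetric positive semidefinite matrix and ε a real d×d matrix such that: (i) for every u in the cone C(s,c₀), uᵀĈu ≥ κ²·‖u‖₂²; and (ii) every entry of ε has absolute value at most λ/γ. Let A₀ be a row-s-sparse d×d matrix and let Â be a minimizer over d×d matrices of L(A) = tr(Aᵀε) + ½·tr((A−A₀)Ĉ(A−A₀)ᵀ) + λ·|A|₁. Then ‖Â − A₀‖_F ≤ ((1+γ)/(γκ²))·λ·√(d·s), where ‖·‖_F is the Frobenius norm. -/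

import Mathlib

set_option maxHeartbeats 1000000


open Matrix

/-- Entrywise ℓ¹ norm of a matrix. -/
noncomputable def matL1 {d : ℕ} (M : Matrix (Fin d) (Fin d) ℝ) : ℝ :=
  ∑ i, ∑ j, |M i j|

/-- The Lasso objective `L(A) = tr(Aᵀ ε) + ½ tr((A - A₀) Ĉ (A - A₀)ᵀ) + λ |A|₁`. -/
noncomputable def lassoObj {d : ℕ} (Chat eps A₀ : Matrix (Fin d) (Fin d) ℝ) (lam : ℝ)
    (A : Matrix (Fin d) (Fin d) ℝ) : ℝ :=
  (Aᵀ * eps).trace + (1 / 2) * ((A - A₀) * Chat * (A - A₀)ᵀ).trace + lam * matL1 A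

/-- The cone `C(s, c₀)`: vectors whose ℓ¹ norm is at most `(1 + c₀)` times the ℓ¹ norm
of their `s` largest (in absolute value) entries. -/
def inCone {d : ℕ} (s : ℕ) (c₀ : ℝ) (u : Fin d → ℝ) : Prop :=
  ∃ I : Finset (Fin d), I.card = s ∧ (∀ i ∈ I, ∀ j ∉ I, |u j| ≤ |u i|) ∧
    ∑ j, |u j| ≤ (1 + c₀) * ∑ i ∈ I, |u i|

/-- A matrix is row-`s`-sparse if every row has at most `s` nonzero entries. -/
def rowSparse {d : ℕ} (s : ℕ) (A : Matrix (Fin d) (Fin d) ℝ) : Prop :=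
  ∀ i, {j | A i j ≠ 0}.ncard ≤ s

/-- Frobenius norm of a matrix. -/
noncomputable def matFrob {d : ℕ} (M : Matrix (Fin d) (Fin d) ℝ) : ℝ :=
  Real.sqrt (∑ i, ∑ j, (M i j) ^ 2)


noncomputable def rowObj {d : ℕ} (Chat : Matrix (Fin d) (Fin d) ℝ) (e a₀ : Fin d → ℝ)
    (lam : ℝ) (a : Fin d → ℝ) : ℝ :=
  a ⬝ᵥ e + (1 / 2) * ((a - a₀) ⬝ᵥ Chat *ᵥ (a - a₀)) + lam * ∑ j, |a j|

lemma lassoObj_eq_sum {d : ℕ} (Chat eps A₀ : Matrix (Fin d) (Fin d) ℝ) (lam : ℝ)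
    (A : Matrix (Fin d) (Fin d) ℝ) :
    lassoObj Chat eps A₀ lam A = ∑ i, rowObj Chat (eps i) (A₀ i) lam (A i) := by
  have h1 : (Aᵀ * eps).trace = ∑ i, (A i) ⬝ᵥ (eps i) := by
    rw [Matrix.trace]
    simp only [Matrix.diag, Matrix.mul_apply, Matrix.transpose_apply, dotProduct]
    rw [Finset.sum_comm]
  have h2 : ((A - A₀) * Chat * (A - A₀)ᵀ).trace
      = ∑ i, ((A i - A₀ i) ⬝ᵥ Chat *ᵥ (A i - A₀ i)) := by
    rw [Matrix.trace]
    simp only [Matrix.diag, Matrix.mul_apply, Matrix.transpose_apply, dotProduct,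
      Matrix.mulVec, Matrix.sub_apply, Finset.sum_mul, dotProduct, Pi.sub_apply]
    refine Finset.sum_congr rfl fun i _ => ?_
    rw [Finset.sum_comm]
    exact Finset.sum_congr rfl fun j _ => by
      rw [Finset.mul_sum]
      exact Finset.sum_congr rfl fun k _ => by ring
  rw [lassoObj, h1, h2, matL1, Finset.mul_sum, Finset.mul_sum, ← Finset.sum_add_distrib,
    ← Finset.sum_add_distrib]
  rfl

lemma rowMin {d : ℕ} (Chat eps A₀ : Matrix (Fin d) (Fin d) ℝ) (lam : ℝ)
    (Ahat : Matrix (Fin d) (Fin d) ℝ)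
    (hmin : ∀ A, lassoObj Chat eps A₀ lam Ahat ≤ lassoObj Chat eps A₀ lam A)
    (i : Fin d) (a : Fin d → ℝ) :
    rowObj Chat (eps i) (A₀ i) lam (Ahat i) ≤ rowObj Chat (eps i) (A₀ i) lam a := by
  have h := hmin (Matrix.updateRow Ahat i a)
  rw [lassoObj_eq_sum, lassoObj_eq_sum] at h
  have hmem : i ∈ (Finset.univ : Finset (Fin d)) := Finset.mem_univ i
  rw [← Finset.add_sum_erase _ _ hmem, ← Finset.add_sum_erase _ _ hmem] at h
  have heq : ∑ j ∈ Finset.univ.erase i, rowObj Chat (eps j) (A₀ j) lam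
        (Matrix.updateRow Ahat i a j)
      = ∑ j ∈ Finset.univ.erase i, rowObj Chat (eps j) (A₀ j) lam (Ahat j) := by
    refine Finset.sum_congr rfl fun j hj => ?_
    rw [Matrix.updateRow_ne (Finset.ne_of_mem_erase hj)]
  rw [heq, Matrix.updateRow_self] at h
  linarith

lemma basic_ineq {d : ℕ} (Chat : Matrix (Fin d) (Fin d) ℝ) (hC : Chat.PosSemidef)
    (e a₀ ah : Fin d → ℝ) (lam : ℝ) (hlam : 0 < lam)
    (hm : ∀ a, rowObj Chat e a₀ lam ah ≤ rowObj Chat e a₀ lam a) :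
    (ah - a₀) ⬝ᵥ Chat *ᵥ (ah - a₀)
      ≤ -((ah - a₀) ⬝ᵥ e) + lam * (∑ j, |a₀ j| - ∑ j, |ah j|) := by
  set u : Fin d → ℝ := ah - a₀ with hu
  set q : ℝ := u ⬝ᵥ Chat *ᵥ u with hqdef
  set R : ℝ := -(u ⬝ᵥ e) + lam * (∑ j, |a₀ j| - ∑ j, |ah j|) with hR
  have hq0 : 0 ≤ q := by
    have := hC.dotProduct_mulVec_nonneg u
    simpa using this
  have key : ∀ t : ℝ, 0 < t → t ≤ 1 → (1 - t / 2) * q ≤ R := by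
    intro t ht0 ht1
    have h := hm (ah - t • u)
    have h1 : (ah - t • u) ⬝ᵥ e = ah ⬝ᵥ e - t * (u ⬝ᵥ e) := by
      rw [sub_dotProduct, smul_dotProduct]; rfl
    have h2 : (ah - t • u - a₀) = (1 - t) • u := by
      ext j; simp [hu, smul_eq_mul]; ring
    have h3 : ((1 - t) • u) ⬝ᵥ Chat *ᵥ ((1 - t) • u) = (1 - t) ^ 2 * q := by
      rw [smul_dotProduct, mulVec_smul, dotProduct_smul, hqdef]
      simp [smul_eq_mul]; ring
    have h4 : ∑ j, |(ah - t • u) j| ≤ (1 - t) * ∑ j, |ah j| + t * ∑ j, |a₀ j| := by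
      rw [Finset.mul_sum, Finset.mul_sum, ← Finset.sum_add_distrib]
      refine Finset.sum_le_sum fun j _ => ?_
      have : (ah - t • u) j = (1 - t) * ah j + t * a₀ j := by
        simp [hu, smul_eq_mul]; ring
      rw [this]
      calc |(1 - t) * ah j + t * a₀ j| ≤ |(1 - t) * ah j| + |t * a₀ j| := abs_add_le _ _
        _ = (1 - t) * |ah j| + t * |a₀ j| := by
            rw [abs_mul, abs_mul, abs_of_nonneg (show (0:ℝ) ≤ 1 - t by linarith), abs_of_nonneg ht0.le]
    rw [rowObj, rowObj, h1, h2, h3] at h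
    have h5 : ah - a₀ = u := rfl
    rw [h5, ← hqdef] at h
    have h6 : lam * ∑ j, |(ah - t • u) j| ≤ lam * ((1 - t) * ∑ j, |ah j| + t * ∑ j, |a₀ j|) :=
      mul_le_mul_of_nonneg_left h4 hlam.le
    have h7 : t * ((1 - t / 2) * q) ≤ t * R := by rw [hR]; nlinarith [h, h6]
    exact le_of_mul_le_mul_left h7 ht0
  show q ≤ R
  refine le_of_forall_pos_le_add fun ε hε => ?_
  rcases eq_or_lt_of_le hq0 with hq | hq
  · have := key 1 one_pos le_rfl
    nlinarith
  · have ht0 : 0 < min 1 (ε / q) := lt_min one_pos (div_pos hε hq)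
    have ht1 : min 1 (ε / q) ≤ 1 := min_le_left _ _
    have hk := key _ ht0 ht1
    have htq : min 1 (ε / q) * q ≤ ε := by
      have h1 : min 1 (ε / q) ≤ ε / q := min_le_right _ _
      calc min 1 (ε / q) * q ≤ (ε / q) * q := mul_le_mul_of_nonneg_right h1 hq.le
        _ = ε := by field_simp
    nlinarith

lemma topSet {d : ℕ} (f : Fin d → ℝ) : ∀ k, k ≤ d → ∃ I : Finset (Fin d),
    I.card = k ∧ ∀ i ∈ I, ∀ j ∉ I, f j ≤ f i := by
  intro k
  induction k with
  | zero => exact fun _ => ⟨∅, by simp⟩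
  | succ k ih =>
    intro hk
    obtain ⟨I, hcard, hI⟩ := ih (Nat.le_of_succ_le hk)
    have hne : Iᶜ.Nonempty := by
      have h1 : Iᶜ.card = d - k := by simp [Finset.card_compl, hcard]
      rw [← Finset.card_pos, h1]; omega
    obtain ⟨j₀, hj₀, hmax⟩ := Iᶜ.exists_max_image f hne
    have hj₀I : j₀ ∉ I := Finset.mem_compl.mp hj₀
    refine ⟨insert j₀ I, by rw [Finset.card_insert_of_notMem hj₀I, hcard], ?_⟩
    intro i hi j hj
    have hjI : j ∉ I := fun h => hj (Finset.mem_insert_of_mem h)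
    rcases Finset.mem_insert.mp hi with rfl | hiI
    · exact hmax j (Finset.mem_compl.mpr hjI)
    · exact hI i hiI j hjI

lemma sum_le_topSet {d : ℕ} (f : Fin d → ℝ) (hf : ∀ j, 0 ≤ f j)
    (S I : Finset (Fin d)) (hcard : S.card ≤ I.card)
    (hI : ∀ i ∈ I, ∀ j ∉ I, f j ≤ f i) :
    ∑ j ∈ S, f j ≤ ∑ i ∈ I, f i := by
  have key : ∑ j ∈ S \ I, f j ≤ ∑ j ∈ I \ S, f j := by
    rcases Finset.eq_empty_or_nonempty (S \ I) with he | hne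
    · rw [he, Finset.sum_empty]
      exact Finset.sum_nonneg fun j _ => hf j
    · have hc : (S \ I).card ≤ (I \ S).card := by
        have h1 := Finset.card_inter_add_card_sdiff S I
        have h2 := Finset.card_inter_add_card_sdiff I S
        rw [Finset.inter_comm I S] at h2
        omega
      have hne' : (I \ S).Nonempty := by
        rw [← Finset.card_pos]
        have := Finset.card_pos.mpr hne
        omega
      obtain ⟨m, hm, hmin⟩ := (I \ S).exists_min_image f hne'
      have hmI : m ∈ I := (Finset.mem_sdiff.mp hm).1
      calc ∑ j ∈ S \ I, f j ≤ (S \ I).card • f m := by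
            refine Finset.sum_le_card_nsmul _ _ _ fun j hj => ?_
            exact hI m hmI j (Finset.mem_sdiff.mp hj).2
        _ ≤ (I \ S).card • f m := by
            have := hf m
            simp only [nsmul_eq_mul]
            exact mul_le_mul_of_nonneg_right (by exact_mod_cast hc) this
        _ ≤ ∑ j ∈ I \ S, f j := Finset.card_nsmul_le_sum _ _ _ fun j hj => hmin j hj
  calc ∑ j ∈ S, f j = ∑ j ∈ S ∩ I, f j + ∑ j ∈ S \ I, f j :=
        (Finset.sum_inter_add_sum_sdiff S I f).symm
    _ ≤ ∑ j ∈ S ∩ I, f j + ∑ j ∈ I \ S, f j := by linarith [key]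
    _ = ∑ i ∈ I, f i := by rw [Finset.inter_comm]; exact Finset.sum_inter_add_sum_sdiff I S f

lemma vecBound {d s : ℕ} (hsd : s ≤ d) (γ lam κ c₀ : ℝ)
    (hγ : 1 < γ) (hlam : 0 < lam) (hκ : 0 < κ) (hc₀ : c₀ = (γ + 1) / (γ - 1))
    (Chat : Matrix (Fin d) (Fin d) ℝ) (hC : Chat.PosSemidef)
    (hRE : ∀ u : Fin d → ℝ, inCone s c₀ u → κ ^ 2 * ∑ i, u i ^ 2 ≤ u ⬝ᵥ Chat *ᵥ u)
    (e a₀ ah : Fin d → ℝ) (he : ∀ j, |e j| ≤ lam / γ)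
    (ha₀ : {j | a₀ j ≠ 0}.ncard ≤ s)
    (hm : ∀ a, rowObj Chat e a₀ lam ah ≤ rowObj Chat e a₀ lam a) :
    ∑ j, (ah j - a₀ j) ^ 2 ≤ ((1 + γ) / (γ * κ ^ 2) * lam * Real.sqrt s) ^ 2 := by
  have hγ0 : 0 < γ := by linarith
  set u : Fin d → ℝ := ah - a₀ with hu
  have hQR := basic_ineq Chat hC e a₀ ah lam hlam hm
  set q : ℝ := u ⬝ᵥ Chat *ᵥ u with hqdef
  have hq0 : 0 ≤ q := by have := hC.dotProduct_mulVec_nonneg u; simpa using this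
  -- support set
  set S : Finset (Fin d) := Finset.univ.filter (fun j => a₀ j ≠ 0) with hS
  have hScard : S.card ≤ s := by
    have : {j | a₀ j ≠ 0} = (S : Set (Fin d)) := by
      ext j; simp [hS]
    rw [this, Set.ncard_coe_finset] at ha₀
    exact ha₀
  set a : ℝ := ∑ j ∈ S, |u j| with ha
  set b : ℝ := ∑ j ∈ Finset.univ.filter (fun j => ¬ a₀ j ≠ 0), |u j| with hb
  have ha0 : 0 ≤ a := Finset.sum_nonneg fun j _ => abs_nonneg _
  have hb0 : 0 ≤ b := Finset.sum_nonneg fun j _ => abs_nonneg _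
  have htot : ∑ j, |u j| = a + b := (Finset.sum_filter_add_sum_filter_not _ _ _).symm
  -- bound R
  have hdot : -(u ⬝ᵥ e) ≤ lam / γ * (a + b) := by
    rw [← htot, Finset.mul_sum]
    calc -(u ⬝ᵥ e) = ∑ j, -(u j * e j) := by rw [dotProduct, ← Finset.sum_neg_distrib]
      _ ≤ ∑ j, lam / γ * |u j| := by
          refine Finset.sum_le_sum fun j _ => ?_
          calc -(u j * e j) ≤ |u j * e j| := neg_le_abs _
            _ = |u j| * |e j| := abs_mul _ _
            _ ≤ |u j| * (lam / γ) := mul_le_mul_of_nonneg_left (he j) (abs_nonneg _)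
            _ = lam / γ * |u j| := mul_comm _ _
  have hl1 : ∑ j, |a₀ j| - ∑ j, |ah j| ≤ a - b := by
    have h1 : ∑ j, |a₀ j| = ∑ j ∈ S, |a₀ j| := by
      refine (Finset.sum_subset (Finset.subset_univ S) fun j _ hj => ?_).symm
      simp [hS] at hj
      simp [hj]
    have h2 : ∑ j, |ah j| = ∑ j ∈ S, |ah j| + ∑ j ∈ Finset.univ.filter (fun j => ¬ a₀ j ≠ 0), |ah j| :=
      (Finset.sum_filter_add_sum_filter_not _ _ _).symm
    have h3 : ∑ j ∈ Finset.univ.filter (fun j => ¬ a₀ j ≠ 0), |ah j| = b := by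
      rw [hb]
      refine Finset.sum_congr rfl fun j hj => ?_
      simp only [Finset.mem_filter, not_not] at hj
      simp [hu, hj.2]
    have h4 : ∑ j ∈ S, |a₀ j| - ∑ j ∈ S, |ah j| ≤ a := by
      rw [ha, ← Finset.sum_sub_distrib]
      refine Finset.sum_le_sum fun j _ => ?_
      calc |a₀ j| - |ah j| ≤ |a₀ j - ah j| := abs_sub_abs_le_abs_sub _ _
        _ = |u j| := by rw [hu]; simp [abs_sub_comm]
    linarith [h1, h2, h3, h4]
  have hqR : q ≤ lam / γ * (a + b) + lam * (a - b) := by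
    calc q ≤ -(u ⬝ᵥ e) + lam * (∑ j, |a₀ j| - ∑ j, |ah j|) := hQR
      _ ≤ lam / γ * (a + b) + lam * (a - b) := by
          have := mul_le_mul_of_nonneg_left hl1 hlam.le
          linarith
  -- cone condition: b ≤ c₀ * a
  have hba : b ≤ c₀ * a := by
    rw [hc₀]
    rw [div_mul_eq_mul_div, le_div_iff₀ (by linarith : (0:ℝ) < γ - 1)]
    have h0 : 0 ≤ lam / γ * (a + b) + lam * (a - b) := le_trans hq0 hqR
    have hγne : γ ≠ 0 := ne_of_gt hγ0
    have h2 : γ / lam * (lam / γ * (a + b) + lam * (a - b)) = (a + b) + γ * (a - b) := by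
      field_simp
    have h1 : 0 ≤ γ / lam * (lam / γ * (a + b) + lam * (a - b)) :=
      mul_nonneg (by positivity) h0
    rw [h2] at h1
    linarith
  -- cone membership
  obtain ⟨I, hIcard, hItop⟩ := topSet (fun j => |u j|) s hsd
  have haI : a ≤ ∑ i ∈ I, |u i| :=
    sum_le_topSet _ (fun j => abs_nonneg _) S I (hScard.trans hIcard.ge) hItop
  have hcone : inCone s c₀ u := by
    refine ⟨I, hIcard, hItop, ?_⟩
    have hc₀0 : 0 ≤ c₀ := by rw [hc₀]; exact div_nonneg (by linarith) (by linarith)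
    calc ∑ j, |u j| = a + b := htot
      _ ≤ ∑ i ∈ I, |u i| + c₀ * ∑ i ∈ I, |u i| := by
          have : b ≤ c₀ * ∑ i ∈ I, |u i| :=
            hba.trans (mul_le_mul_of_nonneg_left haI hc₀0)
          linarith
      _ = (1 + c₀) * ∑ i ∈ I, |u i| := by ring
  have hRE' : κ ^ 2 * ∑ j, u j ^ 2 ≤ q := hRE u hcone
  -- a ≤ √s * √(∑ u²)
  have hCS : a ≤ Real.sqrt s * Real.sqrt (∑ j, u j ^ 2) := by
    rw [← Real.sqrt_mul (Nat.cast_nonneg s)]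
    rw [show a = Real.sqrt (a ^ 2) from (Real.sqrt_sq ha0).symm]
    refine Real.sqrt_le_sqrt ?_
    calc a ^ 2 ≤ S.card * ∑ j ∈ S, |u j| ^ 2 := sq_sum_le_card_mul_sum_sq
      _ ≤ s * ∑ j, u j ^ 2 := by
          refine mul_le_mul (by exact_mod_cast hScard) ?_ ?_ (Nat.cast_nonneg s)
          · refine Finset.sum_le_sum_of_subset_of_nonneg (Finset.subset_univ S)
              (fun j _ _ => sq_nonneg _) |>.trans_eq ?_
            exact Finset.sum_congr rfl fun j _ => by rw [sq_abs]
          · exact Finset.sum_nonneg fun j _ => sq_nonneg _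
  -- final
  set N : ℝ := Real.sqrt (∑ j, u j ^ 2) with hN
  have hN0 : 0 ≤ N := Real.sqrt_nonneg _
  have hN2 : N ^ 2 = ∑ j, u j ^ 2 := Real.sq_sqrt (Finset.sum_nonneg fun j _ => sq_nonneg _)
  have hchain : κ ^ 2 * N ^ 2 ≤ lam * (1 + 1 / γ) * (Real.sqrt s * N) := by
    rw [hN2]
    calc κ ^ 2 * ∑ j, u j ^ 2 ≤ q := hRE'
      _ ≤ lam / γ * (a + b) + lam * (a - b) := hqR
      _ = lam * (1 + 1 / γ) * a - lam * (1 - 1 / γ) * b := by field_simp; ring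
      _ ≤ lam * (1 + 1 / γ) * a := by
          have h1 : 0 ≤ lam * (1 - 1 / γ) * b := by
            have : (0:ℝ) ≤ 1 - 1 / γ := by
              rw [sub_nonneg]
              exact (div_le_one hγ0).mpr hγ.le
            positivity
          linarith
      _ ≤ lam * (1 + 1 / γ) * (Real.sqrt s * N) := by
          refine mul_le_mul_of_nonneg_left (hCS.trans_eq rfl) ?_
          positivity
  have hB : (0:ℝ) ≤ (1 + γ) / (γ * κ ^ 2) * lam * Real.sqrt s := by positivity
  have hgoal : ∑ j, (ah j - a₀ j) ^ 2 = N ^ 2 := by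
    rw [hN2]; rfl
  rw [hgoal]
  rcases eq_or_lt_of_le hN0 with h0 | h0
  · rw [← h0]; simpa using sq_nonneg ((1 + γ) / (γ * κ ^ 2) * lam * Real.sqrt s)
  · have hNle : N ≤ (1 + γ) / (γ * κ ^ 2) * lam * Real.sqrt s := by
      have hk2 : 0 < κ ^ 2 := by positivity
      have h1 : κ ^ 2 * N ≤ lam * (1 + 1 / γ) * Real.sqrt s := by
        have := hchain
        nlinarith
      rw [div_mul_eq_mul_div, div_mul_eq_mul_div, le_div_iff₀ (by positivity : (0:ℝ) < γ * κ ^ 2)]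
      calc N * (γ * κ ^ 2) = γ * (κ ^ 2 * N) := by ring
        _ ≤ γ * (lam * (1 + 1 / γ) * Real.sqrt s) := by
            exact mul_le_mul_of_nonneg_left h1 hγ0.le
        _ = (γ * (1 + 1 / γ)) * lam * Real.sqrt s := by ring
        _ = (1 + γ) * lam * Real.sqrt s := by
            rw [show γ * (1 + 1 / γ) = 1 + γ by
              rw [mul_add, mul_one, mul_one_div, div_self (ne_of_gt hγ0)]; ring]
    exact pow_le_pow_left₀ hN0 hNle 2

/-- Frobenius-norm error bound for the Lasso. -/
theorem stmt_10 (d s : ℕ) (hd : 1 ≤ d) (hs : 1 ≤ s) (hsd : s ≤ d)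
    (γ lam κ : ℝ) (hγ : 1 < γ) (hlam : 0 < lam) (hκ : 0 < κ)
    (c₀ : ℝ) (hc₀ : c₀ = (γ + 1) / (γ - 1))
    (Chat eps : Matrix (Fin d) (Fin d) ℝ) (hC : Chat.PosSemidef)
    (hRE : ∀ u : Fin d → ℝ, inCone s c₀ u → κ ^ 2 * ∑ i, u i ^ 2 ≤ u ⬝ᵥ Chat *ᵥ u)
    (heps : ∀ i j, |eps i j| ≤ lam / γ)
    (A₀ : Matrix (Fin d) (Fin d) ℝ) (hA₀ : rowSparse s A₀)
    (Ahat : Matrix (Fin d) (Fin d) ℝ)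
    (hmin : ∀ A : Matrix (Fin d) (Fin d) ℝ,
      lassoObj Chat eps A₀ lam Ahat ≤ lassoObj Chat eps A₀ lam A) :
    matFrob (Ahat - A₀) ≤ (1 + γ) / (γ * κ ^ 2) * lam * Real.sqrt (d * s) := by
  set B : ℝ := (1 + γ) / (γ * κ ^ 2) * lam * Real.sqrt s with hBdef
  have hγ0 : (0:ℝ) < γ := by linarith
  have hB : (0:ℝ) ≤ B := by rw [hBdef]; positivity
  have hrow : ∀ i, ∑ j, ((Ahat - A₀) i j) ^ 2 ≤ B ^ 2 := by
    intro i
    have h := vecBound hsd γ lam κ c₀ hγ hlam hκ hc₀ Chat hC hRE (eps i) (A₀ i) (Ahat i)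
      (heps i) (hA₀ i) (fun a => rowMin Chat eps A₀ lam Ahat hmin i a)
    refine le_trans (le_of_eq ?_) h
    exact Finset.sum_congr rfl fun j _ => by rw [Matrix.sub_apply]
  have hsum : ∑ i, ∑ j, ((Ahat - A₀) i j) ^ 2 ≤ (d : ℝ) * B ^ 2 := by
    calc ∑ i, ∑ j, ((Ahat - A₀) i j) ^ 2 ≤ ∑ _i : Fin d, B ^ 2 :=
          Finset.sum_le_sum fun i _ => hrow i
      _ = (d : ℝ) * B ^ 2 := by simp [Finset.sum_const, Finset.card_univ, nsmul_eq_mul]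
  rw [matFrob]
  calc Real.sqrt (∑ i, ∑ j, ((Ahat - A₀) i j) ^ 2) ≤ Real.sqrt ((d : ℝ) * B ^ 2) :=
        Real.sqrt_le_sqrt hsum
    _ = Real.sqrt d * B := by rw [Real.sqrt_mul (Nat.cast_nonneg d), Real.sqrt_sq hB]
    _ = (1 + γ) / (γ * κ ^ 2) * lam * Real.sqrt (d * s) := by
        rw [Real.sqrt_mul (Nat.cast_nonneg d), hBdef]
        ring
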